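/- Let A be a finite set of n ≥ 1 distinct integers and let Y₁, Y₂, Y₃ be independent random variables each uniformly distributed on A. Then for every integer x, P[Y₁ + Y₂ + Y₃ = x] ≤ (3 + 1/n²)/(4n). -/

import Mathlib

open Finset

set_option maxHeartbeats 1000000 in
private lemma key_count (C : Finset ℤ) :
    4 * ((C ×ˢ C ×ˢ C).filter (fun t => t.1 + t.2.1 + t.2.2 = 0)).card ≤ 3 * C.card ^ 2 + 1 := by
  classical
  set S := (C ×ˢ C ×ˢ C).filter (fun t => t.1 + t.2.1 + t.2.2 = 0) with hSdef
  set P := C.filter (fun a => 0 < a) with hPdef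
  set Q := C.filter (fun a => a < 0) with hQdef
  set Qs := Q.image (fun a => -a) with hQsdef
  set L := (P ×ˢ Qs).filter (fun p => p.1 < p.2) with hLdef
  set U := (P ×ˢ Qs).filter (fun p => p.2 < p.1) with hUdef
  set Dg := (P ×ˢ Qs).filter (fun p => p.1 = p.2) with hDgdef
  set D := P ∩ Qs with hDdef
  have hSmem : ∀ a b c : ℤ, (a, b, c) ∈ S → a ∈ C ∧ b ∈ C ∧ c ∈ C ∧ a + b + c = 0 := by
    intro a b c ht
    simp only [hSdef, mem_filter, mem_product] at ht
    exact ⟨ht.1.1, ht.1.2.1, ht.1.2.2, ht.2⟩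
  have hPmem : ∀ a, a ∈ C → 0 < a → a ∈ P := by
    intro a h1 h2; simp only [hPdef, mem_filter]; exact ⟨h1, h2⟩
  have hQsmem : ∀ s, -s ∈ C → 0 < s → s ∈ Qs := by
    intro s h1 h2
    simp only [hQsdef, mem_image]
    exact ⟨-s, by simp only [hQdef, mem_filter]; exact ⟨h1, by omega⟩, by ring⟩
  have hLmem : ∀ u v : ℤ, u ∈ P → v ∈ Qs → u < v → (u, v) ∈ L := by
    intro u v h1 h2 h3
    simp only [hLdef, mem_filter, mem_product]
    exact ⟨⟨h1, h2⟩, h3⟩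
  have hUmem : ∀ u v : ℤ, u ∈ P → v ∈ Qs → v < u → (u, v) ∈ U := by
    intro u v h1 h2 h3
    simp only [hUdef, mem_filter, mem_product]
    exact ⟨⟨h1, h2⟩, h3⟩
  -- the seven classes
  set T0 := S.filter (fun t => t.1 = 0 ∨ t.2.1 = 0 ∨ t.2.2 = 0) with hT0def
  set T1 := S.filter (fun t => 0 < t.1 ∧ 0 < t.2.1 ∧ t.2.2 < 0) with hT1def
  set T2 := S.filter (fun t => 0 < t.1 ∧ t.2.1 < 0 ∧ 0 < t.2.2) with hT2def
  set T3 := S.filter (fun t => t.1 < 0 ∧ 0 < t.2.1 ∧ 0 < t.2.2) with hT3def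
  set T4 := S.filter (fun t => t.1 < 0 ∧ t.2.1 < 0 ∧ 0 < t.2.2) with hT4def
  set T5 := S.filter (fun t => t.1 < 0 ∧ 0 < t.2.1 ∧ t.2.2 < 0) with hT5def
  set T6 := S.filter (fun t => 0 < t.1 ∧ t.2.1 < 0 ∧ t.2.2 < 0) with hT6def
  have hcover : S ⊆ T0 ∪ T1 ∪ T2 ∪ T3 ∪ T4 ∪ T5 ∪ T6 := by
    rintro ⟨a, b, c⟩ ht
    obtain ⟨-, -, -, hsum⟩ := hSmem _ _ _ ht
    simp only [hT0def, hT1def, hT2def, hT3def, hT4def, hT5def, hT6def, mem_union, mem_filter,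
      ht, true_and]
    omega
  have hcard : S.card ≤ T0.card + T1.card + T2.card + T3.card + T4.card + T5.card + T6.card := by
    refine le_trans (Finset.card_le_card hcover) ?_
    refine le_trans (Finset.card_union_le _ _) (Nat.add_le_add_right ?_ _)
    refine le_trans (Finset.card_union_le _ _) (Nat.add_le_add_right ?_ _)
    refine le_trans (Finset.card_union_le _ _) (Nat.add_le_add_right ?_ _)
    refine le_trans (Finset.card_union_le _ _) (Nat.add_le_add_right ?_ _)
    refine le_trans (Finset.card_union_le _ _) (Nat.add_le_add_right ?_ _)
    exact Finset.card_union_le _ _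
  -- bounds for the six sign classes
  have hT1c : T1.card ≤ L.card := by
    apply Finset.card_le_card_of_injOn (fun t => (t.1, t.1 + t.2.1))
    · rintro ⟨a, b, c⟩ ht
      dsimp only
      simp only [Finset.mem_coe, hT1def, mem_filter] at ht
      obtain ⟨hts, hpa, hpb, hnc⟩ := ht
      obtain ⟨ha, hb, hc, hsum⟩ := hSmem _ _ _ hts
      exact hLmem _ _ (hPmem a ha hpa) (hQsmem _ (by rw [(by omega : -(a + b) = c)]; exact hc) (by omega)) (by omega)
    · rintro ⟨a, b, c⟩ ht ⟨a', b', c'⟩ ht' hfe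
      rw [Finset.mem_coe, hT1def, mem_filter] at ht ht'
      obtain ⟨-, -, -, hsum⟩ := hSmem _ _ _ ht.1
      obtain ⟨-, -, -, hsum'⟩ := hSmem _ _ _ ht'.1
      simp only [Prod.mk.injEq] at hfe ⊢
      omega
  have hT2c : T2.card ≤ L.card := by
    apply Finset.card_le_card_of_injOn (fun t => (t.1, t.1 + t.2.2))
    · rintro ⟨a, b, c⟩ ht
      dsimp only
      simp only [Finset.mem_coe, hT2def, mem_filter] at ht
      obtain ⟨hts, hpa, hnb, hpc⟩ := ht
      obtain ⟨ha, hb, hc, hsum⟩ := hSmem _ _ _ hts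
      exact hLmem _ _ (hPmem a ha hpa) (hQsmem _ (by rw [(by omega : -(a + c) = b)]; exact hb) (by omega)) (by omega)
    · rintro ⟨a, b, c⟩ ht ⟨a', b', c'⟩ ht' hfe
      rw [Finset.mem_coe, hT2def, mem_filter] at ht ht'
      obtain ⟨-, -, -, hsum⟩ := hSmem _ _ _ ht.1
      obtain ⟨-, -, -, hsum'⟩ := hSmem _ _ _ ht'.1
      simp only [Prod.mk.injEq] at hfe ⊢
      omega
  have hT3c : T3.card ≤ L.card := by
    apply Finset.card_le_card_of_injOn (fun t => (t.2.1, t.2.1 + t.2.2))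
    · rintro ⟨a, b, c⟩ ht
      dsimp only
      simp only [Finset.mem_coe, hT3def, mem_filter] at ht
      obtain ⟨hts, hna, hpb, hpc⟩ := ht
      obtain ⟨ha, hb, hc, hsum⟩ := hSmem _ _ _ hts
      exact hLmem _ _ (hPmem b hb hpb) (hQsmem _ (by rw [(by omega : -(b + c) = a)]; exact ha) (by omega)) (by omega)
    · rintro ⟨a, b, c⟩ ht ⟨a', b', c'⟩ ht' hfe
      rw [Finset.mem_coe, hT3def, mem_filter] at ht ht'
      obtain ⟨-, -, -, hsum⟩ := hSmem _ _ _ ht.1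
      obtain ⟨-, -, -, hsum'⟩ := hSmem _ _ _ ht'.1
      simp only [Prod.mk.injEq] at hfe ⊢
      omega
  have hT4c : T4.card ≤ U.card := by
    apply Finset.card_le_card_of_injOn (fun t => (t.2.2, -t.1))
    · rintro ⟨a, b, c⟩ ht
      dsimp only
      simp only [Finset.mem_coe, hT4def, mem_filter] at ht
      obtain ⟨hts, hna, hnb, hpc⟩ := ht
      obtain ⟨ha, hb, hc, hsum⟩ := hSmem _ _ _ hts
      exact hUmem _ _ (hPmem c hc hpc) (hQsmem _ (by rw [neg_neg]; exact ha) (by omega)) (by omega)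
    · rintro ⟨a, b, c⟩ ht ⟨a', b', c'⟩ ht' hfe
      rw [Finset.mem_coe, hT4def, mem_filter] at ht ht'
      obtain ⟨-, -, -, hsum⟩ := hSmem _ _ _ ht.1
      obtain ⟨-, -, -, hsum'⟩ := hSmem _ _ _ ht'.1
      simp only [Prod.mk.injEq] at hfe ⊢
      omega
  have hT5c : T5.card ≤ U.card := by
    apply Finset.card_le_card_of_injOn (fun t => (t.2.1, -t.1))
    · rintro ⟨a, b, c⟩ ht
      dsimp only
      simp only [Finset.mem_coe, hT5def, mem_filter] at ht
      obtain ⟨hts, hna, hpb, hnc⟩ := ht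
      obtain ⟨ha, hb, hc, hsum⟩ := hSmem _ _ _ hts
      exact hUmem _ _ (hPmem b hb hpb) (hQsmem _ (by rw [neg_neg]; exact ha) (by omega)) (by omega)
    · rintro ⟨a, b, c⟩ ht ⟨a', b', c'⟩ ht' hfe
      rw [Finset.mem_coe, hT5def, mem_filter] at ht ht'
      obtain ⟨-, -, -, hsum⟩ := hSmem _ _ _ ht.1
      obtain ⟨-, -, -, hsum'⟩ := hSmem _ _ _ ht'.1
      simp only [Prod.mk.injEq] at hfe ⊢
      omega
  have hT6c : T6.card ≤ U.card := by
    apply Finset.card_le_card_of_injOn (fun t => (t.1, -t.2.1))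
    · rintro ⟨a, b, c⟩ ht
      dsimp only
      simp only [Finset.mem_coe, hT6def, mem_filter] at ht
      obtain ⟨hts, hpa, hnb, hnc⟩ := ht
      obtain ⟨ha, hb, hc, hsum⟩ := hSmem _ _ _ hts
      exact hUmem _ _ (hPmem a ha hpa) (hQsmem _ (by rw [neg_neg]; exact hb) (by omega)) (by omega)
    · rintro ⟨a, b, c⟩ ht ⟨a', b', c'⟩ ht' hfe
      rw [Finset.mem_coe, hT6def, mem_filter] at ht ht'
      obtain ⟨-, -, -, hsum⟩ := hSmem _ _ _ ht.1
      obtain ⟨-, -, -, hsum'⟩ := hSmem _ _ _ ht'.1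
      simp only [Prod.mk.injEq] at hfe ⊢
      omega
  -- diagonal and disjointness counting
  have hwDg : D.card ≤ Dg.card := by
    apply Finset.card_le_card_of_injOn (fun d => (d, d))
    · intro d hd
      rw [hDdef, Finset.mem_coe, mem_inter] at hd
      simp only [Finset.mem_coe, hDgdef, mem_filter, mem_product]
      exact ⟨⟨hd.1, hd.2⟩, trivial⟩
    · intro d _ e _ h
      simpa using congrArg Prod.fst h
  have hLUDg : L.card + U.card + Dg.card ≤ P.card * Qs.card := by
    have d1 : Disjoint L U := by
      rw [Finset.disjoint_left]
      intro p hp hq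
      simp only [hLdef, mem_filter] at hp
      simp only [hUdef, mem_filter] at hq
      omega
    have d2 : Disjoint (L ∪ U) Dg := by
      rw [Finset.disjoint_left]
      intro p hp hq
      simp only [mem_union] at hp
      simp only [hDgdef, mem_filter] at hq
      rcases hp with hp | hp
      · simp only [hLdef, mem_filter] at hp; omega
      · simp only [hUdef, mem_filter] at hp; omega
    calc L.card + U.card + Dg.card = ((L ∪ U) ∪ Dg).card := by
          rw [Finset.card_union_of_disjoint d2, Finset.card_union_of_disjoint d1]
      _ ≤ (P ×ˢ Qs).card := by
          apply Finset.card_le_card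
          intro p hp
          rw [mem_union, mem_union] at hp
          rcases hp with (hp | hp) | hp
          · simp only [hLdef, mem_filter] at hp; exact hp.1
          · simp only [hUdef, mem_filter] at hp; exact hp.1
          · simp only [hDgdef, mem_filter] at hp; exact hp.1
      _ = P.card * Qs.card := Finset.card_product _ _
  have hqq : Qs.card = Q.card := Finset.card_image_of_injective _ neg_injective
  have hwp : D.card ≤ P.card := Finset.card_le_card inter_subset_left
  have hwq : D.card ≤ Qs.card := Finset.card_le_card inter_subset_right
  -- trichotomy cardinality
  have htri : C.card = P.card + Q.card + (C.filter (fun a => a = 0)).card := by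
    have hun : (P ∪ Q) ∪ C.filter (fun a => a = 0) = C := by
      ext a
      simp only [mem_union, hPdef, hQdef, mem_filter]
      constructor
      · rintro ((h | h) | h) <;> exact h.1
      · intro h
        rcases lt_trichotomy a 0 with hh | hh | hh
        · exact Or.inl (Or.inr ⟨h, hh⟩)
        · exact Or.inr ⟨h, hh⟩
        · exact Or.inl (Or.inl ⟨h, hh⟩)
    have dPQ : Disjoint P Q := by
      rw [Finset.disjoint_left]
      intro a ha hb
      simp only [hPdef, mem_filter] at ha
      simp only [hQdef, mem_filter] at hb
      omega
    have dPQz : Disjoint (P ∪ Q) (C.filter (fun a => a = 0)) := by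
      rw [Finset.disjoint_left]
      intro a ha hb
      simp only [mem_union, hPdef, hQdef, mem_filter] at ha
      simp only [mem_filter] at hb
      omega
    have h' : C.card = ((P ∪ Q) ∪ C.filter (fun a => a = 0)).card := by rw [hun]
    rw [h', Finset.card_union_of_disjoint dPQz, Finset.card_union_of_disjoint dPQ]
  by_cases h0 : (0 : ℤ) ∈ C
  · -- 0 ∈ C
    have hz : C.filter (fun a => a = 0) = {0} := by
      ext a
      simp only [mem_filter, mem_singleton]
      constructor
      · exact fun h => h.2
      · rintro rfl; exact ⟨h0, rfl⟩
    have hzc : (C.filter (fun a => a = 0)).card = 1 := by rw [hz]; rfl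
    -- T0 bound
    have hsub1 : T0.card ≤ (T0.filter (fun t => t ≠ ((0 : ℤ), (0 : ℤ), (0 : ℤ)))).card + 1 := by
      have h := Finset.card_filter_add_card_filter_not
        (s := T0) (p := fun t => t ≠ ((0 : ℤ), (0 : ℤ), (0 : ℤ)))
      have h1 : (T0.filter (fun t => ¬ t ≠ ((0 : ℤ), (0 : ℤ), (0 : ℤ)))).card ≤ 1 := by
        refine le_trans (Finset.card_le_card ?_) (le_of_eq (Finset.card_singleton
          ((0 : ℤ), (0 : ℤ), (0 : ℤ))))
        intro t ht
        rw [mem_filter, not_not] at ht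
        rw [mem_singleton]
        exact ht.2
      omega
    have hinj0 : (T0.filter (fun t => t ≠ ((0 : ℤ), (0 : ℤ), (0 : ℤ)))).card
        ≤ ((Finset.range 3) ×ˢ (D ∪ D.image (fun a => -a))).card := by
      apply Finset.card_le_card_of_injOn
        (fun t => (if t.1 = 0 then (0 : ℕ) else if t.2.1 = 0 then 1 else 2,
                   if t.1 = 0 then t.2.1 else t.1))
      · rintro ⟨a, b, c⟩ ht
        dsimp only
        rw [Finset.mem_coe, mem_filter] at ht
        obtain ⟨ht0, hne⟩ := ht
        simp only [hT0def, mem_filter] at ht0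
        obtain ⟨hts, hor⟩ := ht0
        obtain ⟨ha, hb, hc, hsum⟩ := hSmem _ _ _ hts
        have hne' : ¬(a = 0 ∧ b = 0 ∧ c = 0) := by
          intro h
          exact hne (by simp [Prod.ext_iff, h.1, h.2.1, h.2.2])
        rw [Finset.mem_coe, mem_product]
        constructor
        · simp only [mem_range]
          split_ifs <;> norm_num
        · simp only
          rw [mem_union]
          by_cases ha0 : a = 0
        -- key = b
          · rw [if_pos ha0]
            have hbne : b ≠ 0 := by omega
            rcases lt_or_gt_of_ne hbne with hblt | hbgt
            · right
              rw [mem_image]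
              refine ⟨-b, ?_, by ring⟩
              rw [hDdef, mem_inter]
              constructor
              · exact hPmem (-b) (by rw [(by omega : -b = c)]; exact hc) (by omega)
              · exact hQsmem (-b) (by rw [neg_neg]; exact hb) (by omega)
            · left
              rw [hDdef, mem_inter]
              constructor
              · exact hPmem b hb hbgt
              · exact hQsmem b (by rw [(by omega : -b = c)]; exact hc) hbgt
          · rw [if_neg ha0]
            have hma : (-a) ∈ C := by
              rcases hor with h | h | h
              · exact absurd h ha0
              · rw [(by omega : -a = c)]; exact hc
              · rw [(by omega : -a = b)]; exact hb
            rcases lt_or_gt_of_ne ha0 with halt | hagt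
            · right
              rw [mem_image]
              refine ⟨-a, ?_, by ring⟩
              rw [hDdef, mem_inter]
              constructor
              · exact hPmem (-a) hma (by omega)
              · exact hQsmem (-a) (by rw [neg_neg]; exact ha) (by omega)
            · left
              rw [hDdef, mem_inter]
              constructor
              · exact hPmem a ha hagt
              · exact hQsmem a hma hagt
      · rintro ⟨a, b, c⟩ ht ⟨a', b', c'⟩ ht' hfe
        rw [Finset.mem_coe, mem_filter] at ht ht'
        have ht0 := ht.1
        have ht0' := ht'.1
        simp only [hT0def, mem_filter] at ht0 ht0'
        obtain ⟨hts, hor⟩ := ht0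
        obtain ⟨hts', hor'⟩ := ht0'
        obtain ⟨-, -, -, hsum⟩ := hSmem _ _ _ hts
        obtain ⟨-, -, -, hsum'⟩ := hSmem _ _ _ hts'
        simp only [Prod.mk.injEq] at hfe
        obtain ⟨hfe1, hfe2⟩ := hfe
        simp only [Prod.mk.injEq]
        by_cases ha0 : a = 0 <;> by_cases ha0' : a' = 0 <;>
          by_cases hb0 : b = 0 <;> by_cases hb0' : b' = 0 <;>
          simp only [ha0, ha0', hb0, hb0', if_pos, if_neg, if_true, if_false] at hfe1 hfe2 <;>
          first
            | omega
            | (simp [ha0, ha0', hb0, hb0'] at hfe1 hfe2 <;> omega)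
    have hT0c : T0.card ≤ 6 * D.card + 1 := by
      have hcc : ((Finset.range 3) ×ˢ (D ∪ D.image (fun a => -a))).card ≤ 6 * D.card := by
        rw [Finset.card_product, Finset.card_range]
        have : (D ∪ D.image (fun a => -a)).card ≤ 2 * D.card := by
          refine le_trans (Finset.card_union_le _ _) ?_
          have := Finset.card_image_le (s := D) (f := fun a => -a)
          omega
        omega
      omega
    -- final arithmetic
    have hfin : L.card + U.card + D.card ≤ P.card * Q.card := by
      rw [← hqq]
      omega
    have hwq' : D.card ≤ Q.card := by omega
    have hS1 : S.card ≤ 6 * D.card + 1 + 3 * L.card + 3 * U.card := by omega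
    rw [htri, hzc]
    nlinarith [two_mul_le_add_sq P.card Q.card, hS1, hfin, hwp, hwq']
  · -- 0 ∉ C
    have hz : C.filter (fun a => a = 0) = ∅ := by
      rw [Finset.filter_eq_empty_iff]
      intro a ha h
      exact h0 (h ▸ ha)
    have hzc : (C.filter (fun a => a = 0)).card = 0 := by rw [hz]; rfl
    have hT0c : T0.card = 0 := by
      rw [Finset.card_eq_zero]
      apply Finset.eq_empty_of_forall_notMem
      rintro ⟨a, b, c⟩ ht
      simp only [hT0def, mem_filter] at ht
      obtain ⟨hts, hor⟩ := ht
      obtain ⟨ha, hb, hc, -⟩ := hSmem _ _ _ hts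
      rcases hor with h | h | h
      · exact h0 (h ▸ ha)
      · exact h0 (h ▸ hb)
      · exact h0 (h ▸ hc)
    have hfin : L.card + U.card ≤ P.card * Q.card := by
      rw [← hqq]
      omega
    have hS1 : S.card ≤ 3 * L.card + 3 * U.card := by omega
    rw [htri, hzc]
    nlinarith [two_mul_le_add_sq P.card Q.card, hS1, hfin]

theorem stmt_2 (n : ℕ) (hn : 1 ≤ n) (A : Finset ℤ) (hA : A.card = n) (x : ℤ) :
    (((A ×ˢ A ×ˢ A).filter (fun t => t.1 + t.2.1 + t.2.2 = x)).card : ℝ) / (n : ℝ) ^ 3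
      ≤ (3 + 1 / (n : ℝ) ^ 2) / (4 * n) := by
  classical
  set C := A.image (fun a => 3 * a - x) with hCdef
  have hCcard : C.card = n := by
    rw [hCdef, Finset.card_image_of_injective _ (fun u v h => by omega), hA]
  have hbij : ((A ×ˢ A ×ˢ A).filter (fun t => t.1 + t.2.1 + t.2.2 = x)).card
      = ((C ×ˢ C ×ˢ C).filter (fun t => t.1 + t.2.1 + t.2.2 = 0)).card := by
    apply Finset.card_bij (fun t _ => (3 * t.1 - x, 3 * t.2.1 - x, 3 * t.2.2 - x))
    · rintro ⟨a, b, c⟩ ht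
      simp only [mem_filter, mem_product] at ht ⊢
      obtain ⟨⟨ha, hb, hc⟩, hsum⟩ := ht
      refine ⟨⟨?_, ?_, ?_⟩, by omega⟩
      · rw [hCdef, mem_image]; exact ⟨a, ha, rfl⟩
      · rw [hCdef, mem_image]; exact ⟨b, hb, rfl⟩
      · rw [hCdef, mem_image]; exact ⟨c, hc, rfl⟩
    · rintro ⟨a, b, c⟩ - ⟨a', b', c'⟩ - h
      simp only [Prod.mk.injEq] at h ⊢
      omega
    · rintro ⟨u, v, w⟩ ht
      simp only [mem_filter, mem_product, hCdef, mem_image] at ht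
      obtain ⟨⟨⟨a, ha, hau⟩, ⟨b, hb, hbv⟩, ⟨c, hc, hcw⟩⟩, hsum⟩ := ht
      refine ⟨(a, b, c), ?_, ?_⟩
      · simp only [mem_filter, mem_product]
        exact ⟨⟨ha, hb, hc⟩, by omega⟩
      · simp only [Prod.mk.injEq]
        exact ⟨hau, hbv, hcw⟩
  have hkey := key_count C
  rw [hbij]
  set N := ((C ×ˢ C ×ˢ C).filter (fun t => t.1 + t.2.1 + t.2.2 = 0)).card with hNdef
  rw [hCcard] at hkey
  have hn0 : (0 : ℝ) < (n : ℝ) := by exact_mod_cast hn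
  have hkeyR : 4 * (N : ℝ) ≤ 3 * (n : ℝ) ^ 2 + 1 := by exact_mod_cast hkey
  rw [div_le_div_iff₀ (by positivity) (by positivity)]
  have he : (3 + 1 / (n : ℝ) ^ 2) * (n : ℝ) ^ 3 = 3 * (n : ℝ) ^ 3 + (n : ℝ) := by
    field_simp
  rw [he]
  nlinarith [mul_le_mul_of_nonneg_right hkeyR (le_of_lt hn0)]
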